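/- (Robustness of TD(λ) limits to cost manipulation.) Let P ∈ ℝ^{n×n} be row-stochastic with stationary distribution π, D = diag(π), α ∈ (0,1), λ ∈ [0,1), and let Φ ∈ ℝ^{n×K} have linearly independent columns. Define M := (1−λ) Σ_{m=0}^∞ λ^m α^{m+1} P^{m+1}, A := Φᵀ D (M − I) Φ, and for a cost vector c ∈ ℝ^n define b(c) := Φᵀ D Σ_{m=0}^∞ (αλ)^m P^m c. Let ḡ, g̃ ∈ ℝ^n be the true and manipulated cost vectors, η := g̃ − ḡ, and suppose r*, r̃* ∈ ℝ^K satisfy A r* + b(ḡ) = 0 and A r̃* + b(g̃) = 0. Then ‖Φ r̃* − Φ r*‖_D ≤ (1/(1−α)) · ‖η‖_D. -/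

import Mathlib

set_option maxHeartbeats 1000000


open Matrix

/-- The weighted quadratic norm `‖J‖_D = √(∑ i, π i · J i²)` associated with a weight
vector `π`. -/
noncomputable def normD {n : ℕ} (pi : Fin n → ℝ) (J : Fin n → ℝ) : ℝ :=
  Real.sqrt (∑ i, pi i * (J i) ^ 2)

noncomputable def Tl {n : ℕ} (pi : Fin n → ℝ) : (Fin n → ℝ) →ₗ[ℝ] EuclideanSpace ℝ (Fin n) where
  toFun v := WithLp.toLp 2 (fun i => Real.sqrt (pi i) * v i)
  map_add' u v := by ext i; show Real.sqrt (pi i) * (u i + v i) = _; simp [mul_add]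
  map_smul' c v := by ext i; show Real.sqrt (pi i) * (c * v i) = c * (Real.sqrt (pi i) * v i); ring

lemma normD_eq_Tl {n : ℕ} (pi : Fin n → ℝ) (hpi : ∀ i, 0 ≤ pi i) (v : Fin n → ℝ) :
    normD pi v = ‖Tl pi v‖ := by
  rw [EuclideanSpace.norm_eq, normD]
  congr 1
  refine Finset.sum_congr rfl fun i _ => ?_
  show pi i * v i ^ 2 = ‖Real.sqrt (pi i) * v i‖ ^ 2
  rw [Real.norm_eq_abs, ← sq_abs, abs_mul, mul_pow, sq_abs, sq_abs, Real.sq_sqrt (hpi i)]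

lemma weighted_CS {n : ℕ} (pi : Fin n → ℝ) (hpi : ∀ i, 0 ≤ pi i) (u v : Fin n → ℝ) :
    |∑ i, pi i * (u i * v i)| ≤ normD pi u * normD pi v := by
  have h := abs_real_inner_le_norm (Tl pi u) (Tl pi v)
  rw [PiLp.inner_apply] at h
  rw [normD_eq_Tl pi hpi, normD_eq_Tl pi hpi]
  refine le_trans (le_of_eq ?_) h
  congr 1
  refine Finset.sum_congr rfl fun i _ => ?_
  show pi i * (u i * v i) = inner ℝ ((Tl pi u) i) ((Tl pi v) i)
  show pi i * (u i * v i) = inner ℝ (Real.sqrt (pi i) * u i) (Real.sqrt (pi i) * v i)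
  simp only [RCLike.inner_apply, starRingEnd_apply, star_trivial]
  have h2 : Real.sqrt (pi i) * Real.sqrt (pi i) = pi i := Real.mul_self_sqrt (hpi i)
  linear_combination (-(u i * v i)) * h2
section
variable {n : ℕ} {P : Matrix (Fin n) (Fin n) ℝ} {pi : Fin n → ℝ}

lemma stoch_pow (hP0 : ∀ i j, 0 ≤ P i j) (hP1 : ∀ i, ∑ j, P i j = 1) (m : ℕ) :
    (∀ i j, 0 ≤ (P ^ m) i j) ∧ (∀ i, ∑ j, (P ^ m) i j = 1) := by
  induction m with
  | zero =>
    constructor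
    · intro i j; simp [Matrix.one_apply]; split <;> norm_num
    · intro i; simp [Matrix.one_apply]
  | succ m ih =>
    rw [pow_succ]
    constructor
    · intro i j
      rw [Matrix.mul_apply]
      exact Finset.sum_nonneg fun k _ => mul_nonneg (ih.1 i k) (hP0 k j)
    · intro i
      simp only [Matrix.mul_apply]
      rw [Finset.sum_comm]
      calc ∑ k, ∑ j, (P ^ m) i k * P k j = ∑ k, (P ^ m) i k * ∑ j, P k j := by
            simp [Finset.mul_sum]
        _ = 1 := by simp [hP1, ih.2 i]

lemma entry_le_one (hP0 : ∀ i j, 0 ≤ P i j) (hP1 : ∀ i, ∑ j, P i j = 1) (i j : Fin n) :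
    P i j ≤ 1 := by
  rw [← hP1 i]
  exact Finset.single_le_sum (fun k _ => hP0 i k) (Finset.mem_univ j)

lemma mulVec_coord_bound (hP0 : ∀ i j, 0 ≤ P i j) (hP1 : ∀ i, ∑ j, P i j = 1)
    (v : Fin n → ℝ) (i : Fin n) : |(P *ᵥ v) i| ≤ ∑ j, |v j| := by
  calc |(P *ᵥ v) i| ≤ ∑ j, |P i j * v j| := by
        rw [Matrix.mulVec, dotProduct]
        exact Finset.abs_sum_le_sum_abs _ _
    _ ≤ ∑ j, |v j| := by
        refine Finset.sum_le_sum fun j _ => ?_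
        rw [abs_mul, abs_of_nonneg (hP0 i j)]
        nlinarith [entry_le_one hP0 hP1 i j, abs_nonneg (v j), hP0 i j]
end

section
variable {n : ℕ} {P : Matrix (Fin n) (Fin n) ℝ} {pi : Fin n → ℝ}

lemma normD_nonneg (pi v : Fin n → ℝ) : 0 ≤ normD pi v := Real.sqrt_nonneg _

lemma normD_sq (hpi : ∀ i, 0 ≤ pi i) (v : Fin n → ℝ) :
    normD pi v ^ 2 = ∑ i, pi i * v i ^ 2 :=
  Real.sq_sqrt (Finset.sum_nonneg fun i _ => mul_nonneg (hpi i) (sq_nonneg _))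

lemma normD_smul (pi : Fin n → ℝ) (hpi : ∀ i, 0 ≤ pi i) (c : ℝ) (v : Fin n → ℝ) :
    normD pi (c • v) = |c| * normD pi v := by
  rw [normD, normD]
  have : ∀ i, pi i * ((c • v) i) ^ 2 = c ^ 2 * (pi i * v i ^ 2) := by
    intro i; show pi i * (c * v i) ^ 2 = _; ring
  rw [Finset.sum_congr rfl fun i _ => this i, ← Finset.mul_sum,
    Real.sqrt_mul (sq_nonneg c), Real.sqrt_sq_eq_abs]

lemma normD_contract (hP0 : ∀ i j, 0 ≤ P i j) (hP1 : ∀ i, ∑ j, P i j = 1)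
    (hpi : ∀ i, 0 ≤ pi i) (hstat : ∀ j, ∑ i, pi i * P i j = pi j) (v : Fin n → ℝ) :
    normD pi (P *ᵥ v) ≤ normD pi v := by
  rw [normD, normD]
  apply Real.sqrt_le_sqrt
  have key : ∀ i, ((P *ᵥ v) i) ^ 2 ≤ ∑ j, P i j * v j ^ 2 := by
    intro i
    have h := Finset.sum_mul_sq_le_sq_mul_sq Finset.univ
      (fun j => Real.sqrt (P i j)) (fun j => Real.sqrt (P i j) * v j)
    have e1 : ∀ j, Real.sqrt (P i j) * (Real.sqrt (P i j) * v j) = P i j * v j := by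
      intro j; rw [← mul_assoc, Real.mul_self_sqrt (hP0 i j)]
    have e2 : ∀ j, Real.sqrt (P i j) ^ 2 = P i j := fun j => Real.sq_sqrt (hP0 i j)
    have e3 : ∀ j, (Real.sqrt (P i j) * v j) ^ 2 = P i j * v j ^ 2 := by
      intro j; rw [mul_pow, e2]
    rw [Finset.sum_congr rfl fun j _ => e1 j, Finset.sum_congr rfl fun j _ => e2 j,
      Finset.sum_congr rfl fun j _ => e3 j, hP1 i, one_mul] at h
    have : (P *ᵥ v) i = ∑ j, P i j * v j := by
      rw [Matrix.mulVec, dotProduct]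
    rw [this]
    exact h
  calc ∑ i, pi i * ((P *ᵥ v) i) ^ 2 ≤ ∑ i, pi i * ∑ j, P i j * v j ^ 2 :=
        Finset.sum_le_sum fun i _ => mul_le_mul_of_nonneg_left (key i) (hpi i)
    _ = ∑ j, (∑ i, pi i * P i j) * v j ^ 2 := by
        simp_rw [Finset.mul_sum, Finset.sum_mul]
        rw [Finset.sum_comm]
        refine Finset.sum_congr rfl fun j _ => Finset.sum_congr rfl fun i _ => by ring
    _ = ∑ j, pi j * v j ^ 2 := by simp_rw [hstat]

lemma normD_pow_contract (hP0 : ∀ i j, 0 ≤ P i j) (hP1 : ∀ i, ∑ j, P i j = 1)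
    (hpi : ∀ i, 0 ≤ pi i) (hstat : ∀ j, ∑ i, pi i * P i j = pi j) (m : ℕ) (v : Fin n → ℝ) :
    normD pi ((P ^ m) *ᵥ v) ≤ normD pi v := by
  induction m with
  | zero => simp [Matrix.one_mulVec]
  | succ m ih =>
    rw [pow_succ']
    rw [← Matrix.mulVec_mulVec]
    exact le_trans (normD_contract hP0 hP1 hpi hstat _) ih

lemma normD_tsum_le (hpi : ∀ i, 0 ≤ pi i) (w : ℕ → Fin n → ℝ) (hw : Summable w)
    (g : ℕ → ℝ) (hg : Summable g) (hbd : ∀ m, normD pi (w m) ≤ g m) :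
    normD pi (∑' m, w m) ≤ ∑' m, g m := by
  let Tc : (Fin n → ℝ) →L[ℝ] EuclideanSpace ℝ (Fin n) := (Tl pi).toContinuousLinearMap
  have hTc : ∀ v, Tc v = Tl pi v := fun v => rfl
  have hnorm : ∀ m, ‖Tc (w m)‖ = normD pi (w m) := by
    intro m; rw [hTc, ← normD_eq_Tl pi hpi]
  have hsumn : Summable fun m => ‖Tc (w m)‖ :=
    Summable.of_nonneg_of_le (fun m => norm_nonneg _)
      (fun m => (hnorm m) ▸ hbd m) hg
  calc normD pi (∑' m, w m) = ‖Tc (∑' m, w m)‖ := by rw [hTc, normD_eq_Tl pi hpi]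
    _ = ‖∑' m, Tc (w m)‖ := by rw [Tc.map_tsum hw]
    _ ≤ ∑' m, ‖Tc (w m)‖ := norm_tsum_le_tsum_norm hsumn
    _ ≤ ∑' m, g m := Summable.tsum_le_tsum (fun m => (hnorm m) ▸ hbd m) hsumn hg
end
/-- Robustness of TD(λ) limits to cost manipulation: with
`M = (1−λ)∑ λ^m α^{m+1} P^{m+1}`, `A = Φᵀ D (M − I) Φ`, `b(c) = Φᵀ D ∑ (αλ)^m P^m c`, if
`A r* + b(ḡ) = 0` and `A r̃* + b(g̃) = 0`, then with `η = g̃ − ḡ` we have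
`‖Φ r̃* − Φ r*‖_D ≤ (1/(1−α)) ‖η‖_D`. -/
theorem TD_limit_robustness
    {n K : ℕ} (P : Matrix (Fin n) (Fin n) ℝ)
    (hP0 : ∀ i j, 0 ≤ P i j) (hP1 : ∀ i, ∑ j, P i j = 1)
    (pi : Fin n → ℝ) (hpi0 : ∀ i, 0 < pi i) (hpi1 : ∑ i, pi i = 1)
    (hstat : ∀ j, ∑ i, pi i * P i j = pi j)
    (α lam : ℝ) (hα0 : 0 < α) (hα1 : α < 1) (hlam0 : 0 ≤ lam) (hlam1 : lam < 1)
    (Φ : Matrix (Fin n) (Fin K) ℝ)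
    (hΦ : LinearIndependent ℝ (fun k : Fin K => fun i : Fin n => Φ i k))
    (D : Matrix (Fin n) (Fin n) ℝ) (hD : D = Matrix.diagonal pi)
    (M : Matrix (Fin n) (Fin n) ℝ)
    (hM : M = (1 - lam) • ∑' m : ℕ, (lam ^ m * α ^ (m + 1)) • P ^ (m + 1))
    (A : Matrix (Fin K) (Fin K) ℝ) (hA : A = Φᵀ * D * (M - 1) * Φ)
    (b : (Fin n → ℝ) → (Fin K → ℝ))
    (hb : ∀ c, b c = (Φᵀ * D * ∑' m : ℕ, (α * lam) ^ m • P ^ m).mulVec c)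
    (gbar gt η : Fin n → ℝ) (hη : η = gt - gbar)
    (rstar rtstar : Fin K → ℝ)
    (hrstar : A.mulVec rstar + b gbar = 0)
    (hrtstar : A.mulVec rtstar + b gt = 0) :
    normD pi (Φ.mulVec rtstar - Φ.mulVec rstar) ≤ (1 / (1 - α)) * normD pi η := by
  have hpi0' : ∀ i, 0 ≤ pi i := fun i => (hpi0 i).le
  set q : ℝ := α * lam with hq
  have hq0 : 0 ≤ q := mul_nonneg hα0.le hlam0
  have hq1 : q < 1 := by nlinarith
  have h1q : 0 < 1 - q := by linarith
  have hgeo : Summable fun m : ℕ => q ^ m := summable_geometric_of_lt_one hq0 hq1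
  -- coordinate bound constant
  set x : Fin K → ℝ := rtstar - rstar with hx
  set z : Fin n → ℝ := Φ *ᵥ x with hz
  set N : Matrix (Fin n) (Fin n) ℝ := ∑' m : ℕ, (α * lam) ^ m • P ^ m with hN
  -- Summability of the matrix series
  have hmat_sum : ∀ (c : ℕ → ℝ) (e : ℕ → ℕ), (∀ m, |c m| ≤ α ^ (e m - m) * q ^ m) →
      Summable (fun m => c m • P ^ (e m)) := by
    intro c e hce
    refine Pi.summable.2 fun i => Pi.summable.2 fun j => ?_
    refine Summable.of_norm_bounded hgeo fun m => ?_
    have hs := stoch_pow hP0 hP1 (e m)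
    have hle1 : (P ^ (e m)) i j ≤ 1 := by
      rw [← hs.2 i]
      exact Finset.single_le_sum (fun k _ => hs.1 i k) (Finset.mem_univ j)
    have h0 : 0 ≤ (P ^ (e m)) i j := hs.1 i j
    have : ‖(c m • P ^ (e m)) i j‖ = |c m| * |(P ^ (e m)) i j| := by
      simp [Matrix.smul_apply, abs_mul]
    rw [this, abs_of_nonneg h0]
    have hαem : α ^ (e m - m) ≤ 1 := pow_le_one₀ hα0.le hα1.le
    have h2 : |c m| ≤ q ^ m := le_trans (hce m) (by nlinarith [pow_nonneg hq0 m])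
    nlinarith [abs_nonneg (c m), pow_nonneg hq0 m]
  have hS1sum : Summable (fun m : ℕ => (lam ^ m * α ^ (m + 1)) • P ^ (m + 1)) := by
    refine hmat_sum _ (fun m => m + 1) fun m => ?_
    have : |lam ^ m * α ^ (m + 1)| = α ^ (m + 1 - m) * q ^ m := by
      rw [abs_of_nonneg (by positivity)]
      simp only [Nat.add_sub_cancel_left, pow_one, hq, mul_pow, pow_succ]
      ring
    exact this.le
  have hS2sum : Summable (fun m : ℕ => (α * lam) ^ m • P ^ m) := by
    refine hmat_sum _ (fun m => m) fun m => ?_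
    rw [abs_of_nonneg (pow_nonneg hq0 m)]
    simp
  -- mulVec commutes with tsum
  have hmulVec_tsum : ∀ (S : ℕ → Matrix (Fin n) (Fin n) ℝ), Summable S → ∀ v,
      (∑' m, S m) *ᵥ v = ∑' m, (S m) *ᵥ v := by
    intro S hS v
    let L : Matrix (Fin n) (Fin n) ℝ →ₗ[ℝ] (Fin n → ℝ) :=
      { toFun := fun B => B.mulVec v,
        map_add' := fun B C => Matrix.add_mulVec B C v,
        map_smul' := fun c B => Matrix.smul_mulVec c B v }
    exact (L.toContinuousLinearMap.map_tsum hS : _)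
  -- vector-level summability
  have hvec_sum : ∀ (c : ℕ → ℝ) (e : ℕ → ℕ) (v : Fin n → ℝ), (∀ m, |c m| ≤ q ^ m) →
      Summable (fun m => c m • ((P ^ (e m)) *ᵥ v)) := by
    intro c e v hc
    refine Pi.summable.2 fun i => ?_
    refine Summable.of_norm_bounded (hgeo.mul_right (∑ j, |v j|))
      fun m => ?_
    have hb := mulVec_coord_bound (stoch_pow hP0 hP1 (e m)).1 (stoch_pow hP0 hP1 (e m)).2 v i
    have : ‖(c m • ((P ^ (e m)) *ᵥ v)) i‖ = |c m| * |((P ^ (e m)) *ᵥ v) i| := by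
      simp [abs_mul]
    rw [this]
    exact mul_le_mul (hc m) hb (abs_nonneg _) (pow_nonneg hq0 m)
  -- key dot-product identity
  have hQ : A *ᵥ x + (Φᵀ * D * N) *ᵥ η = 0 := by
    have hbg : b gt - b gbar = (Φᵀ * D * N) *ᵥ η := by
      rw [hb, hb, hη, ← Matrix.mulVec_sub]
    have : A *ᵥ x + (Φᵀ * D * N) *ᵥ η
        = (A *ᵥ rtstar + b gt) - (A *ᵥ rstar + b gbar) := by
      rw [hx, Matrix.mulVec_sub, ← hbg]; abel
    rw [this, hrtstar, hrstar, sub_zero]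
  have hdot : x ⬝ᵥ (A *ᵥ x + (Φᵀ * D * N) *ᵥ η) = 0 := by
    rw [hQ, dotProduct_zero]
  have hAx : A *ᵥ x = Φᵀ *ᵥ (D *ᵥ ((M - 1) *ᵥ z)) := by
    rw [hA, ← Matrix.mulVec_mulVec, ← Matrix.mulVec_mulVec, ← Matrix.mulVec_mulVec, hz]
  have hQη : (Φᵀ * D * N) *ᵥ η = Φᵀ *ᵥ (D *ᵥ (N *ᵥ η)) := by
    rw [← Matrix.mulVec_mulVec, ← Matrix.mulVec_mulVec]
  have h2 : z ⬝ᵥ (D *ᵥ ((M - 1) *ᵥ z) + D *ᵥ (N *ᵥ η)) = 0 := by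
    rw [hAx, hQη, ← Matrix.mulVec_add, Matrix.dotProduct_mulVec, Matrix.vecMul_transpose,
      ← hz] at hdot
    exact hdot
  have h3 : ∑ i, pi i * z i ^ 2
      = ∑ i, pi i * (z i * (M *ᵥ z) i) + ∑ i, pi i * (z i * (N *ᵥ η) i) := by
    have h2' := h2
    simp only [dotProduct, hD, Matrix.mulVec_diagonal, Matrix.sub_mulVec,
      Matrix.one_mulVec, Pi.add_apply, Pi.sub_apply] at h2'
    have expand : ∀ i : Fin n,
        z i * (pi i * ((M *ᵥ z) i - z i) + pi i * (N *ᵥ η) i)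
        = pi i * (z i * (M *ᵥ z) i) + pi i * (z i * (N *ᵥ η) i) - pi i * z i ^ 2 := by
      intro i; ring
    rw [Finset.sum_congr rfl fun i _ => expand i, Finset.sum_sub_distrib,
      Finset.sum_add_distrib] at h2'
    linarith
  set Z : ℝ := normD pi z with hZ
  set E : ℝ := normD pi η with hE
  -- bound on normD (M *ᵥ z)
  have hMz : normD pi (M *ᵥ z) ≤ (1 - lam) * ((1 - q)⁻¹ * (α * Z)) := by
    have hc : ∀ m : ℕ, |lam ^ m * α ^ (m + 1)| ≤ q ^ m := by
      intro m
      rw [abs_of_nonneg (by positivity)]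
      have : lam ^ m * α ^ (m + 1) = q ^ m * α := by rw [hq, mul_pow, pow_succ]; ring
      nlinarith [pow_nonneg hq0 m]
    have hwsum := hvec_sum (fun m => lam ^ m * α ^ (m + 1)) (fun m => m + 1) z hc
    have hstep : M *ᵥ z = (1 - lam) • ∑' m, (lam ^ m * α ^ (m + 1)) • ((P ^ (m + 1)) *ᵥ z) := by
      rw [hM, Matrix.smul_mulVec, hmulVec_tsum _ hS1sum]
      congr 1
      exact tsum_congr fun m => Matrix.smul_mulVec _ _ _
    rw [hstep, normD_smul pi hpi0', abs_of_nonneg (by linarith : (0:ℝ) ≤ 1 - lam)]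
    have hbd : ∀ m : ℕ, normD pi ((lam ^ m * α ^ (m + 1)) • ((P ^ (m + 1)) *ᵥ z))
        ≤ q ^ m * (α * Z) := by
      intro m
      rw [normD_smul pi hpi0', abs_of_nonneg (by positivity)]
      have h1 : normD pi ((P ^ (m + 1)) *ᵥ z) ≤ Z := normD_pow_contract hP0 hP1 hpi0' hstat _ z
      have h2 : lam ^ m * α ^ (m + 1) = q ^ m * α := by rw [hq, mul_pow, pow_succ]; ring
      rw [h2, mul_assoc]
      exact mul_le_mul_of_nonneg_left (mul_le_mul_of_nonneg_left h1 hα0.le) (pow_nonneg hq0 m)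
    have := normD_tsum_le hpi0' _ hwsum (fun m => q ^ m * (α * Z)) (hgeo.mul_right _) hbd
    have htv : ∑' m : ℕ, q ^ m * (α * Z) = (1 - q)⁻¹ * (α * Z) := by
      rw [tsum_mul_right, tsum_geometric_of_lt_one hq0 hq1]
    rw [htv] at this
    nlinarith [normD_nonneg pi (∑' m, (lam ^ m * α ^ (m + 1)) • ((P ^ (m + 1)) *ᵥ z))]
  -- bound on normD (N *ᵥ η)
  have hNη : normD pi (N *ᵥ η) ≤ (1 - q)⁻¹ * E := by
    have hc : ∀ m : ℕ, |(α * lam) ^ m| ≤ q ^ m := by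
      intro m; rw [abs_of_nonneg (pow_nonneg hq0 m)]
    have hwsum := hvec_sum (fun m => (α * lam) ^ m) (fun m => m) η hc
    have hstep : N *ᵥ η = ∑' m, (α * lam) ^ m • ((P ^ m) *ᵥ η) := by
      rw [hN, hmulVec_tsum _ hS2sum]
      exact tsum_congr fun m => Matrix.smul_mulVec _ _ _
    rw [hstep]
    have hbd : ∀ m : ℕ, normD pi ((α * lam) ^ m • ((P ^ m) *ᵥ η)) ≤ q ^ m * E := by
      intro m
      rw [normD_smul pi hpi0', abs_of_nonneg (pow_nonneg hq0 m)]
      have h1 : normD pi ((P ^ m) *ᵥ η) ≤ E := normD_pow_contract hP0 hP1 hpi0' hstat _ η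
      exact mul_le_mul_of_nonneg_left h1 (pow_nonneg hq0 m)
    have := normD_tsum_le hpi0' _ hwsum (fun m => q ^ m * E) (hgeo.mul_right _) hbd
    rwa [tsum_mul_right, tsum_geometric_of_lt_one hq0 hq1] at this
  -- assemble
  have hZ2 : Z ^ 2 ≤ Z * normD pi (M *ᵥ z) + Z * normD pi (N *ᵥ η) := by
    have hcs1 := weighted_CS pi hpi0' z (M *ᵥ z)
    have hcs2 := weighted_CS pi hpi0' z (N *ᵥ η)
    have := normD_sq hpi0' z
    calc Z ^ 2 = ∑ i, pi i * z i ^ 2 := by rw [hZ, normD_sq hpi0']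
      _ = ∑ i, pi i * (z i * (M *ᵥ z) i) + ∑ i, pi i * (z i * (N *ᵥ η) i) := h3
      _ ≤ Z * normD pi (M *ᵥ z) + Z * normD pi (N *ᵥ η) := by
          have a1 := le_abs_self (∑ i, pi i * (z i * (M *ᵥ z) i))
          have a2 := le_abs_self (∑ i, pi i * (z i * (N *ᵥ η) i))
          have := hcs1; have := hcs2
          rw [hZ]
          linarith
  have hZnn : 0 ≤ Z := normD_nonneg pi z
  have hEnn : 0 ≤ E := normD_nonneg pi η
  have hgoal : normD pi (Φ *ᵥ rtstar - Φ *ᵥ rstar) = Z := by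
    rw [hZ, hz, hx, Matrix.mulVec_sub]
  rw [hgoal]
  have h1α : 0 < 1 - α := by linarith
  rcases eq_or_lt_of_le hZnn with hZ0 | hZpos
  · rw [← hZ0]
    positivity
  · -- Z > 0 : cancel and conclude
    have hMznn := normD_nonneg pi (M *ᵥ z)
    have hNηnn := normD_nonneg pi (N *ᵥ η)
    have step : Z ≤ (1 - lam) * ((1 - q)⁻¹ * (α * Z)) + (1 - q)⁻¹ * E := by
      nlinarith
    have step' : Z ≤ ((1 - lam) * (α * Z) + E) / (1 - q) := by
      rw [div_eq_mul_inv]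
      have e : (1 - lam) * ((1 - q)⁻¹ * (α * Z)) + (1 - q)⁻¹ * E
          = ((1 - lam) * (α * Z) + E) * (1 - q)⁻¹ := by ring
      linarith [step]
    have step2 : (1 - q) * Z ≤ (1 - lam) * (α * Z) + E := by
      have := (le_div_iff₀ h1q).1 step'
      linarith
    have step3 : (1 - α) * Z ≤ E := by
      have : 1 - q - (1 - lam) * α = 1 - α := by rw [hq]; ring
      nlinarith
    calc Z ≤ E / (1 - α) := by rw [le_div_iff₀ h1α]; nlinarith [step3]
      _ = 1 / (1 - α) * E := by ring
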